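/- Every zigzag in the n-simplex α_n has length n+1, and the number of zigzags (identifying each zigzag with its reverse) is n!/2 for n ≥ 2. -/

import Mathlib

open scoped Classical

variable {V : Type*}

/-- `C` is a facet (maximal face) of a pure rank-`n` complex: a face with `n` vertices. -/
def IsFacet (n : ℕ) (faces : Finset V → Prop) (C : Finset V) : Prop :=
  faces C ∧ C.card = n

/-- `faces` describes a thin pure simplicial complex of rank `n` over the vertex set `V`:
it is downward closed, every singleton is a face, every face has at most `n` vertices and is
contained in a facet, and every ridge (face with `n - 1` vertices) lies in exactly two facets. -/
def IsThinComplex (n : ℕ) (faces : Finset V → Prop) : Prop :=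
  (∀ v : V, faces {v}) ∧
  (∀ ⦃X Y : Finset V⦄, faces X → Y ⊆ X → faces Y) ∧
  (∀ ⦃X : Finset V⦄, faces X → X.card ≤ n) ∧
  (∀ ⦃X : Finset V⦄, faces X → ∃ C : Finset V, IsFacet n faces C ∧ X ⊆ C) ∧
  (∀ ⦃R : Finset V⦄, faces R → R.card = n - 1 →
    {C : Finset V | IsFacet n faces C ∧ R ⊆ C}.ncard = 2)

/-- A flag, encoded by the ordered vertex sequence `x_0, …, x_{n-1}` determining it:
the chain of faces is `{x_0} ⊂ {x_0,x_1} ⊂ … ⊂ {x_0,…,x_{n-1}}`, the top being a facet. -/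
def IsFlag (n : ℕ) (faces : Finset V → Prop) (F : List V) : Prop :=
  F.length = n ∧ F.Nodup ∧ faces F.toFinset

/-- `G = T(F)` for the zigzag operator `T = σ_{n-1} ∘ ⋯ ∘ σ_0`: if `F` is determined by the
vertex sequence `x_0, x_1, …, x_{n-1}`, then `T(F)` is determined by `x_1, …, x_{n-1}, y` with
`y ≠ x_0`. -/
def TStep (n : ℕ) (faces : Finset V → Prop) (F G : List V) : Prop :=
  IsFlag n faces F ∧ IsFlag n faces G ∧
    ∃ y : V, G = F.tail ++ [y] ∧ F.head? ≠ some y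

/-- A zigzag of length `l`: the orbit `F, T F, T² F, …` of the operator `T` on flags, recorded
as the sequence `i ↦ Tⁱ F`; it is `l`-periodic with `l` the minimal period. -/
def IsZigzag (n : ℕ) (faces : Finset V → Prop) (l : ℕ) (F : ℕ → List V) : Prop :=
  0 < l ∧ (∀ i : ℕ, TStep n faces (F i) (F (i + 1))) ∧ (∀ i : ℕ, F (i + l) = F i) ∧
    ∀ m : ℕ, 0 < m → (∀ i : ℕ, F (i + m) = F i) → l ≤ m

/-- The set of flags of a zigzag together with those of its reverse zigzag; two zigzags are
identified (a zigzag is identified with its reverse, and with its cyclic shifts) exactly when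
these sets coincide. -/
def ZigzagClass (F : ℕ → List V) : Set (List V) :=
  Set.range F ∪ Set.range fun i => (F i).reverse

/-- `G = σ_i(F)`: the flag `G` has the same `j`-faces as `F` for all `j ≠ i`, and a different
`i`-face (the `j`-face of the flag with vertex sequence `F` is `(F.take (j+1)).toFinset`). -/
def SigmaStep (n : ℕ) (faces : Finset V → Prop) (i : ℕ) (F G : List V) : Prop :=
  IsFlag n faces F ∧ IsFlag n faces G ∧
    (∀ j : ℕ, j < n → j ≠ i → (G.take (j + 1)).toFinset = (F.take (j + 1)).toFinset) ∧
    (G.take (i + 1)).toFinset ≠ (F.take (i + 1)).toFinset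

/-- `G = T_δ(F)` where `T_δ = σ_{δ(n-1)} ∘ ⋯ ∘ σ_{δ(0)}`. -/
def TDeltaStep (n : ℕ) (faces : Finset V → Prop) (δ : Equiv.Perm (Fin n))
    (F G : List V) : Prop :=
  ∃ c : ℕ → List V, c 0 = F ∧ c n = G ∧
    ∀ i : Fin n, SigmaStep n faces (δ i) (c i) (c (i + 1))

/-- A generalized zigzag (δ-zigzag) of length `l`: the orbit of `T_δ` on flags. -/
def IsGenZigzag (n : ℕ) (faces : Finset V → Prop) (δ : Equiv.Perm (Fin n)) (l : ℕ)
    (F : ℕ → List V) : Prop :=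
  0 < l ∧ (∀ i : ℕ, TDeltaStep n faces δ (F i) (F (i + 1))) ∧ (∀ i : ℕ, F (i + l) = F i) ∧
    ∀ m : ℕ, 0 < m → (∀ i : ℕ, F (i + m) = F i) → l ≤ m

/-- Adjacency in the facet-adjacency graph `Γ_{n-1}(Δ)`: two distinct facets meeting in a ridge. -/
def FacetAdj (n : ℕ) (faces : Finset V → Prop) (C D : Finset V) : Prop :=
  IsFacet n faces C ∧ IsFacet n faces D ∧ C ≠ D ∧ (C ∩ D).card = n - 1

/-- `p 0, p 1, …, p m` is a path in the facet-adjacency graph. -/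
def IsFacetPath (n : ℕ) (faces : Finset V → Prop) (m : ℕ) (p : ℕ → Finset V) : Prop :=
  ∀ i : ℕ, i < m → FacetAdj n faces (p i) (p (i + 1))

/-- The path distance in the facet-adjacency graph `Γ_{n-1}(Δ)`. -/
noncomputable def facetDist (n : ℕ) (faces : Finset V → Prop) (X Y : Finset V) : ℕ :=
  sInf {m : ℕ | ∃ p : ℕ → Finset V, p 0 = X ∧ p m = Y ∧ IsFacetPath n faces m p}

/-- The complex is a chamber complex: the facet-adjacency graph is connected. -/
def ChamberConnected (n : ℕ) (faces : Finset V → Prop) : Prop :=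
  ∀ C D : Finset V, IsFacet n faces C → IsFacet n faces D →
    ∃ (m : ℕ) (p : ℕ → Finset V), p 0 = C ∧ p m = D ∧ IsFacetPath n faces m p

/-! ### Auxiliary development for `stmt8` -/

namespace ZZ

variable {n : ℕ}

/-- The faces of the simplex. -/
def sx (n : ℕ) : Finset (Fin (n + 1)) → Prop := fun X => X ≠ Finset.univ

/-- window `i` of the full list `L`. -/
def W (n : ℕ) (L : List (Fin (n + 1))) (i : ℕ) : List (Fin (n + 1)) :=
  (L.rotate i).take n

/-- `L` is a full list: an enumeration of all vertices. -/
def Full (n : ℕ) (L : List (Fin (n + 1))) : Prop :=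
  L.length = n + 1 ∧ L.Nodup

lemma miss_unique {T : List (Fin (n + 1))} (hT : T.Nodup) (hl : T.length = n)
    {a b : Fin (n + 1)} (ha : a ∉ T) (hb : b ∉ T) : a = b := by
  have hcard : (T.toFinsetᶜ : Finset (Fin (n + 1))).card = 1 := by
    rw [Finset.card_compl, List.toFinset_card_of_nodup hT, hl]
    simp
  exact Finset.card_le_one.mp hcard.le a (by simpa using ha) b (by simpa using hb)

lemma full_ext {X Y : List (Fin (n + 1))} (hX : Full n X) (hY : Full n Y)
    (h : X.take n = Y.take n) : X = Y := by
  obtain ⟨a, ha⟩ : ∃ a, X.drop n = [a] := by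
    apply List.length_eq_one_iff.mp; rw [List.length_drop, hX.1]; omega
  obtain ⟨b, hb⟩ : ∃ b, Y.drop n = [b] := by
    apply List.length_eq_one_iff.mp; rw [List.length_drop, hY.1]; omega
  have hXs : X = X.take n ++ [a] := by rw [← ha, List.take_append_drop]
  have hYs : Y = Y.take n ++ [b] := by rw [← hb, List.take_append_drop]
  have hna : a ∉ X.take n := by
    intro hmem
    have := (List.nodup_append'.mp (hXs ▸ hX.2)).2.2
    exact this hmem (by simp)
  have hnb : b ∉ X.take n := by
    intro hmem
    have := (List.nodup_append'.mp (hYs ▸ hY.2)).2.2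
    exact this (h ▸ hmem) (by simp)
  have hlen : (X.take n).length = n := by rw [List.length_take, hX.1]; omega
  have hnd : (X.take n).Nodup := hX.2.sublist (List.take_sublist _ _)
  have hab : a = b := miss_unique hnd hlen hna hnb
  rw [hXs, hYs, ← h, hab]

lemma full_rotate {L : List (Fin (n + 1))} (hL : Full n L) (i : ℕ) :
    Full n (L.rotate i) :=
  ⟨by rw [List.length_rotate, hL.1], List.nodup_rotate.mpr hL.2⟩

lemma full_reverse {L : List (Fin (n + 1))} (hL : Full n L) :
    Full n L.reverse := ⟨by rw [List.length_reverse, hL.1], List.nodup_reverse.mpr hL.2⟩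

lemma toFinset_eq_univ_iff {α : Type*} [Fintype α] (F : List α) (i1 : DecidableEq α) :
    @List.toFinset _ i1 F = Finset.univ ↔ ∀ x, x ∈ F := by
  constructor
  · intro h x
    have : x ∈ @List.toFinset _ i1 F := h ▸ Finset.mem_univ x
    simpa using this
  · intro h
    ext x
    simpa using h x

lemma isFlag_of (h1 : n ≥ 1) {F : List (Fin (n + 1))} (hl : F.length = n) (hd : F.Nodup) :
    IsFlag n (sx n) F := by
  refine ⟨hl, hd, ?_⟩
  intro h
  have hall : ∀ x : Fin (n + 1), x ∈ F := (toFinset_eq_univ_iff F _).mp h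
  have hsub : (Finset.univ : Finset (Fin (n + 1))) ⊆ F.toFinset := fun x _ => by
    simpa using hall x
  have hcard := Finset.card_le_card hsub
  rw [Finset.card_univ, Fintype.card_fin, List.toFinset_card_of_nodup hd, hl] at hcard
  omega

lemma W_length {L : List (Fin (n + 1))} (hL : Full n L) (i : ℕ) :
    (W n L i).length = n := by
  rw [W, List.length_take, List.length_rotate, hL.1]; omega

lemma W_nodup {L : List (Fin (n + 1))} (hL : Full n L) (i : ℕ) :
    (W n L i).Nodup :=
  (List.nodup_rotate.mpr hL.2).sublist (List.take_sublist _ _)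

lemma W_flag (h1 : n ≥ 1) {L : List (Fin (n + 1))} (hL : Full n L) (i : ℕ) :
    IsFlag n (sx n) (W n L i) :=
  isFlag_of h1 (W_length hL i) (W_nodup hL i)

lemma rotate_one_cons {α : Type*} (a : α) (t : List α) :
    (a :: t).rotate 1 = t ++ [a] := by
  simpa using List.rotate_cons_succ t a 0

lemma W_step (h1 : n ≥ 1) {L : List (Fin (n + 1))} (hL : Full n L) (i : ℕ) :
    ∃ y, W n L (i + 1) = (W n L i).tail ++ [y] ∧ (W n L i).head? ≠ some y := by
  have hM : Full n (L.rotate i) := full_rotate hL i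
  obtain ⟨a, t, hat⟩ : ∃ a t, L.rotate i = a :: t :=
    List.exists_cons_of_ne_nil (by intro h; rw [h] at hM; simp [Full] at hM)
  have ht : t.length = n := by
    have := hM.1; rw [hat] at this; simpa using this
  obtain ⟨m, hm⟩ : ∃ m, n = m + 1 := ⟨n - 1, by omega⟩
  obtain ⟨y, hy⟩ : ∃ y, t.drop m = [y] := by
    apply List.length_eq_one_iff.mp; rw [List.length_drop, ht]; omega
  have hts : t = t.take m ++ [y] := by rw [← hy, List.take_append_drop]
  have hW1 : W n L (i + 1) = t := by
    rw [W, ← List.rotate_rotate, hat, rotate_one_cons]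
    exact List.take_left' ht
  have hW0 : W n L i = a :: t.take m := by
    have h : (a :: t).take (m + 1) = a :: t.take m := rfl
    rw [← hm] at h
    rw [W, hat]
    exact h
  refine ⟨y, ?_, ?_⟩
  · rw [hW1, hW0]
    simp only [List.tail_cons]
    exact hts
  · rw [hW0]
    simp only [List.head?_cons, ne_eq, Option.some.injEq]
    intro hay
    have : a ∉ t := by
      have := hM.2; rw [hat] at this; exact (List.nodup_cons.mp this).1
    apply this
    rw [hay, hts]; simp

lemma TStep_W (h1 : n ≥ 1) {L : List (Fin (n + 1))} (hL : Full n L) (i : ℕ) :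
    TStep n (sx n) (W n L i) (W n L (i + 1)) := by
  obtain ⟨y, h2, h3⟩ := W_step h1 hL i
  exact ⟨W_flag h1 hL i, W_flag h1 hL (i + 1), y, h2, h3⟩

lemma TStep_unique (h1 : n ≥ 1) {F G G' : List (Fin (n + 1))}
    (h : TStep n (sx n) F G) (h' : TStep n (sx n) F G') : G = G' := by
  obtain ⟨hF, hG, y, hGy, hy⟩ := h
  obtain ⟨-, hG', y', hGy', hy'⟩ := h'
  obtain ⟨a, t, hat⟩ : ∃ a t, F = a :: t :=
    List.exists_cons_of_ne_nil
      (by intro hh; rw [hh] at hF; have := hF.1; simp at this; omega)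
  have key : ∀ (z : Fin (n + 1)) (Z : List (Fin (n + 1))), Z = F.tail ++ [z] → Z.Nodup →
      F.head? ≠ some z → z ∉ F := by
    intro z Z hZ hZn hzh
    rw [hat]
    simp only [List.mem_cons]
    rintro (rfl | hzt)
    · exact hzh (by rw [hat]; rfl)
    · rw [hat] at hZ
      simp only [List.tail_cons] at hZ
      rw [hZ] at hZn
      exact (List.nodup_append'.mp hZn).2.2 hzt (by simp)
  have hy1 := key y G hGy hG.2.1 hy
  have hy2 := key y' G' hGy' hG'.2.1 hy'
  rw [hGy, hGy', miss_unique hF.2.1 hF.1 hy1 hy2]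

lemma zigzag_eq_W (h1 : n ≥ 1) {l : ℕ} {F : ℕ → List (Fin (n + 1))}
    (hz : IsZigzag n (sx n) l F) : ∃ L, Full n L ∧ ∀ i, F i = W n L i := by
  obtain ⟨hl, hstep, hper, hmin⟩ := hz
  have hF0 : IsFlag n (sx n) (F 0) := (hstep 0).1
  obtain ⟨a, ha⟩ : ∃ a : Fin (n + 1), a ∉ F 0 := by
    by_contra hc
    push_neg at hc
    exact hF0.2.2 ((toFinset_eq_univ_iff (F 0) _).mpr hc)
  have hfull : Full n (F 0 ++ [a]) := by
    constructor
    · simp [hF0.1]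
    · rw [List.nodup_append']
      exact ⟨hF0.2.1, List.nodup_singleton a, by
        intro x hx hx'; simp at hx'; subst hx'; exact ha hx⟩
  refine ⟨F 0 ++ [a], hfull, ?_⟩
  intro i
  induction i with
  | zero =>
    rw [W, List.rotate_zero]
    exact (List.take_left' hF0.1).symm
  | succ i ih =>
    have h1' := hstep i
    rw [ih] at h1'
    exact TStep_unique h1 h1' (TStep_W h1 hfull i)

lemma W_per {L : List (Fin (n + 1))} (hL : Full n L) (i : ℕ) :
    W n L (i + (n + 1)) = W n L i := by
  have h1 : (L.rotate i).length = n + 1 := by simp [hL.1]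
  show (L.rotate (i + (n + 1))).take n = (L.rotate i).take n
  rw [← List.rotate_rotate]
  have h2 : (L.rotate i).rotate (n + 1) = L.rotate i := by
    have := List.rotate_length (L.rotate i)
    rwa [h1] at this
  rw [h2]

lemma W_min {L : List (Fin (n + 1))} (hL : Full n L) {m : ℕ} (hm : 0 < m)
    (h : ∀ i, W n L (i + m) = W n L i) : n + 1 ≤ m := by
  by_contra hc
  push_neg at hc
  have h0 := h 0
  rw [Nat.zero_add] at h0
  have hrot : L.rotate m = L.rotate 0 :=
    full_ext (full_rotate hL m) (full_rotate hL 0) (by rw [W] at h0; rw [h0, W])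
  have := hL.2.rotate_congr (by intro hh; rw [hh] at hL; simp [Full] at hL) m 0 hrot
  rw [hL.1, Nat.zero_mod, Nat.mod_eq_of_lt hc] at this
  omega

lemma zigzag_W (h1 : n ≥ 1) {L : List (Fin (n + 1))} (hL : Full n L) :
    IsZigzag n (sx n) (n + 1) (W n L) := by
  refine ⟨Nat.succ_pos n, TStep_W h1 hL, W_per hL, ?_⟩
  intro m hm hper
  exact W_min hL hm hper

lemma zigzag_length (h1 : n ≥ 1) {l : ℕ} {F : ℕ → List (Fin (n + 1))}
    (hz : IsZigzag n (sx n) l F) : l = n + 1 := by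
  obtain ⟨L, hL, hF⟩ := zigzag_eq_W h1 hz
  obtain ⟨hl, hstep, hper, hmin⟩ := hz
  have hle : l ≤ n + 1 := hmin (n + 1) (Nat.succ_pos n)
    (fun i => by rw [hF, hF, W_per hL])
  have hge : n + 1 ≤ l := W_min hL hl (fun i => by rw [← hF, ← hF, hper i])
  omega

/-! ### Reverse windows -/

lemma rev_W {L : List (Fin (n + 1))} (hL : Full n L) (i : ℕ) :
    (W n L i).reverse = W n (L.rotate i).reverse 1 := by
  have hM : Full n (L.rotate i) := full_rotate hL i
  obtain ⟨b, s, hbs⟩ : ∃ b s, (L.rotate i).reverse = b :: s :=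
    List.exists_cons_of_ne_nil
      (by intro hh; have := congrArg List.length hh; simp [hM.1] at this)
  have hs : s.length = n := by
    have := congrArg List.length hbs
    simp only [List.length_reverse, hM.1, List.length_cons] at this
    omega
  have hMeq : L.rotate i = s.reverse ++ [b] := by
    have := congrArg List.reverse hbs
    simpa using this
  have e1 : W n L i = s.reverse := by
    rw [W, hMeq]
    exact List.take_left' (by simp [hs])
  have e2 : W n (L.rotate i).reverse 1 = s := by
    rw [W, hbs, rotate_one_cons]
    exact List.take_left' hs
  rw [e1, e2, List.reverse_reverse]

lemma range_W_rotate {L : List (Fin (n + 1))} (hL : Full n L) (j : ℕ) :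
    Set.range (W n (L.rotate j)) = Set.range (W n L) := by
  ext x
  constructor
  · rintro ⟨i, rfl⟩
    exact ⟨j + i, by rw [W, W, List.rotate_rotate]⟩
  · rintro ⟨i, rfl⟩
    refine ⟨i + j * n, ?_⟩
    rw [W, W, List.rotate_rotate]
    congr 1
    have harith : j + (i + j * n) = i + j * (n + 1) := by ring
    rw [harith]
    have e1 : L.rotate (i + j * (n + 1)) = L.rotate ((i + j * (n + 1)) % (n + 1)) := by
      have := List.rotate_mod L (i + j * (n + 1))
      rw [hL.1] at this
      exact this.symm
    have e2 : L.rotate (i % (n + 1)) = L.rotate i := by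
      have := List.rotate_mod L i
      rwa [hL.1] at this
    rw [e1, Nat.add_mul_mod_self_right, e2]

lemma range_rev_W {L : List (Fin (n + 1))} (hL : Full n L) :
    Set.range (fun i => (W n L i).reverse) = Set.range (W n L.reverse) := by
  ext x
  constructor
  · rintro ⟨i, rfl⟩
    show (W n L i).reverse ∈ _
    have h1 := rev_W hL i
    obtain ⟨k, hk⟩ : L.reverse ~r (L.rotate i).reverse :=
      List.IsRotated.reverse ⟨i, rfl⟩
    rw [h1, ← hk, ← range_W_rotate (full_reverse hL) k]
    exact ⟨1, rfl⟩
  · rintro ⟨j, rfl⟩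
    have h1 := rev_W (full_reverse hL) j
    have hrot : L ~r (L.reverse.rotate j).reverse := by
      have := List.IsRotated.reverse (⟨j, rfl⟩ : L.reverse ~r L.reverse.rotate j)
      rwa [List.reverse_reverse] at this
    obtain ⟨k, hk⟩ := hrot
    have h2 : (W n L.reverse j).reverse = W n (L.rotate k) 1 := by rw [h1, ← hk]
    obtain ⟨i0, hi0⟩ : ∃ i0, W n L i0 = W n (L.rotate k) 1 := by
      have := range_W_rotate hL k
      have hmem : W n (L.rotate k) 1 ∈ Set.range (W n L) := this ▸ ⟨1, rfl⟩
      exact hmem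
    exact ⟨i0, by simp only; rw [hi0, ← h2, List.reverse_reverse]⟩

/-! ### The class of a zigzag -/

/-- The zigzag class determined by a full list. -/
def Phi (n : ℕ) (L : List (Fin (n + 1))) : Set (List (Fin (n + 1))) :=
  Set.range (W n L) ∪ Set.range (W n L.reverse)

lemma class_eq_Phi {L : List (Fin (n + 1))} (hL : Full n L) :
    ZigzagClass (W n L) = Phi n L := by
  rw [ZigzagClass, Phi, range_rev_W hL]

lemma Phi_rotate {L : List (Fin (n + 1))} (hL : Full n L) (j : ℕ) :
    Phi n (L.rotate j) = Phi n L := by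
  rw [Phi, Phi, range_W_rotate hL j]
  congr 1
  obtain ⟨k, hk⟩ : L.reverse ~r (L.rotate j).reverse :=
    List.IsRotated.reverse ⟨j, rfl⟩
  rw [← hk, range_W_rotate (full_reverse hL) k]

lemma Phi_reverse (L : List (Fin (n + 1))) : Phi n L.reverse = Phi n L := by
  rw [Phi, Phi, List.reverse_reverse, Set.union_comm]

lemma W_zero (L : List (Fin (n + 1))) : W n L 0 = L.take n := by
  rw [W, List.rotate_zero]

lemma Phi_inj {L M : List (Fin (n + 1))} (hL : Full n L) (hM : Full n M)
    (h : Phi n M = Phi n L) :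
    (∃ k, L.rotate k = M) ∨ ∃ k, L.reverse.rotate k = M := by
  have hmem : M.take n ∈ Phi n L := by
    rw [← h]
    exact Or.inl ⟨0, W_zero M⟩
  rcases hmem with ⟨i, hi⟩ | ⟨i, hi⟩
  · exact Or.inl ⟨i, full_ext (full_rotate hL i) hM hi⟩
  · exact Or.inr ⟨i, full_ext (full_rotate (full_reverse hL) i) hM hi⟩

/-! ### No rotation equals the reverse -/

lemma no_refl (hn : 2 ≤ n) {L : List (Fin (n + 1))} (hL : Full n L) (k : ℕ) :
    L.rotate k ≠ L.reverse := by
  intro h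
  have hlen : L.length = n + 1 := hL.1
  have hb0 : 0 < (L.rotate k).length := by simp [hlen]
  have hb1 : 1 < (L.rotate k).length := by simp [hlen]; omega
  have hb0' : 0 < L.reverse.length := by simp [hlen]
  have hb1' : 1 < L.reverse.length := by simp [hlen]; omega
  have h0 : (L.rotate k)[0]'hb0 = L.reverse[0]'hb0' := List.getElem_of_eq h hb0
  have h1 : (L.rotate k)[1]'hb1 = L.reverse[1]'hb1' := List.getElem_of_eq h hb1
  rw [List.getElem_rotate, List.getElem_reverse] at h0 h1
  have e0 : (0 + k) % L.length = L.length - 1 - 0 := hL.2.getElem_inj_iff.mp h0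
  have e1 : (1 + k) % L.length = L.length - 1 - 1 := hL.2.getElem_inj_iff.mp h1
  rw [hlen] at e0 e1
  have hk0 : k % (n + 1) = n := by simpa using e0
  have hcontra : (1 + k) % (n + 1) = 0 := by
    rw [Nat.add_mod, hk0, Nat.mod_eq_of_lt (show 1 < n + 1 by omega), Nat.add_comm,
      Nat.mod_self]
  rw [hcontra] at e1
  omega

/-! ### Enumeration of full lists by permutations -/

/-- The full list associated with a permutation. -/
def E (n : ℕ) (σ : Equiv.Perm (Fin (n + 1))) : List (Fin (n + 1)) :=
  (List.finRange (n + 1)).map σ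

lemma E_full (σ : Equiv.Perm (Fin (n + 1))) : Full n (E n σ) :=
  ⟨by simp [E], (List.nodup_finRange _).map σ.injective⟩

lemma E_getElem (σ : Equiv.Perm (Fin (n + 1))) (i : ℕ) (h : i < (E n σ).length) :
    (E n σ)[i] = σ ⟨i, by simpa [E] using h⟩ := by
  simp [E]

lemma E_inj : Function.Injective (E n) := by
  intro σ τ h
  ext i
  have hi : (i : ℕ) < (E n σ).length := by simp [E]; have := i.isLt; omega
  have hi' : (i : ℕ) < (E n τ).length := by simp [E]; have := i.isLt; omega
  have h2 := List.getElem_of_eq h hi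
  rw [E_getElem σ i hi, E_getElem τ i hi'] at h2
  simp only [Fin.eta] at h2
  exact congrArg Fin.val h2

lemma E_surj {L : List (Fin (n + 1))} (hL : Full n L) : ∃ σ, E n σ = L := by
  have hinj : Function.Injective
      (fun i : Fin (n + 1) => L[(i : ℕ)]'(by rw [hL.1]; exact i.isLt)) := by
    intro a b hab
    exact Fin.ext (hL.2.getElem_inj_iff.mp hab)
  refine ⟨Equiv.ofBijective _ (Finite.injective_iff_bijective.mp hinj), ?_⟩
  apply List.ext_getElem (by simp [E, hL.1])
  intro i h1 h2
  rw [E_getElem]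
  simp [Equiv.ofBijective_apply]

/-! ### The dihedral orbit -/

/-- The dihedral orbit of a full list. -/
noncomputable def D (n : ℕ) (L : List (Fin (n + 1))) : Finset (List (Fin (n + 1))) :=
  ((Finset.range (n + 1)).image fun i => L.rotate i) ∪
    ((Finset.range (n + 1)).image fun i => L.reverse.rotate i)

lemma D_mem {L M : List (Fin (n + 1))} (hL : Full n L) :
    M ∈ D n L ↔ (∃ k, L.rotate k = M) ∨ ∃ k, L.reverse.rotate k = M := by
  constructor
  · intro h
    rw [D, Finset.mem_union, Finset.mem_image, Finset.mem_image] at h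
    rcases h with ⟨i, _, hi⟩ | ⟨i, _, hi⟩
    · exact Or.inl ⟨i, hi⟩
    · exact Or.inr ⟨i, hi⟩
  · intro h
    rw [D, Finset.mem_union, Finset.mem_image, Finset.mem_image]
    rcases h with ⟨k, hk⟩ | ⟨k, hk⟩
    · refine Or.inl ⟨k % (n + 1), Finset.mem_range.mpr (Nat.mod_lt _ (Nat.succ_pos n)), ?_⟩
      rw [← hk]
      have := List.rotate_mod L k
      rwa [hL.1] at this
    · refine Or.inr ⟨k % (n + 1), Finset.mem_range.mpr (Nat.mod_lt _ (Nat.succ_pos n)), ?_⟩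
      rw [← hk]
      have := List.rotate_mod L.reverse k
      rwa [(full_reverse hL).1] at this

lemma rotate_inj_on {L : List (Fin (n + 1))} (hL : Full n L) :
    ∀ i ∈ Finset.range (n + 1), ∀ j ∈ Finset.range (n + 1),
      L.rotate i = L.rotate j → i = j := by
  intro i hi j hj h
  have hne : L ≠ [] := by
    intro hh
    rw [hh] at hL
    simp [Full] at hL
  have := hL.2.rotate_congr hne i j h
  rw [hL.1] at this
  rw [Finset.mem_range] at hi hj
  rwa [Nat.mod_eq_of_lt hi, Nat.mod_eq_of_lt hj] at this

lemma D_card (hn : 2 ≤ n) {L : List (Fin (n + 1))} (hL : Full n L) :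
    (D n L).card = 2 * (n + 1) := by
  rw [D, Finset.card_union_of_disjoint, Finset.card_image_of_injOn (rotate_inj_on hL),
    Finset.card_image_of_injOn (rotate_inj_on (full_reverse hL)), Finset.card_range]
  · ring
  · rw [Finset.disjoint_left]
    rintro M hM hM'
    rw [Finset.mem_image] at hM hM'
    obtain ⟨i, hi, hiM⟩ := hM
    obtain ⟨j, hj, hjM⟩ := hM'
    rw [Finset.mem_range] at hi hj
    apply no_refl hn hL (i + (n + 1 - j))
    rw [← List.rotate_rotate, hiM, ← hjM, List.rotate_rotate]
    have hsum : j + (n + 1 - j) = n + 1 := by omega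
    rw [hsum]
    have := List.rotate_length L.reverse
    rwa [(full_reverse hL).1] at this

lemma Phi_eq_iff (hn : 2 ≤ n) {L M : List (Fin (n + 1))} (hL : Full n L) (hM : Full n M) :
    Phi n M = Phi n L ↔ M ∈ D n L := by
  rw [D_mem hL]
  constructor
  · exact Phi_inj hL hM
  · rintro (⟨k, rfl⟩ | ⟨k, rfl⟩)
    · exact Phi_rotate hL k
    · rw [Phi_rotate (full_reverse hL) k, Phi_reverse]

/-! ### Counting -/

lemma count_classes (hn : 2 ≤ n) :
    ((Finset.univ : Finset (Equiv.Perm (Fin (n + 1)))).image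
      fun σ => Phi n (E n σ)).card = n.factorial / 2 := by
  classical
  set f : Equiv.Perm (Fin (n + 1)) → Set (List (Fin (n + 1))) :=
    fun σ => Phi n (E n σ) with hf
  set t := (Finset.univ : Finset (Equiv.Perm (Fin (n + 1)))).image f with ht
  have hfiber : ∀ S ∈ t, (Finset.univ.filter fun σ => f σ = S).card = 2 * (n + 1) := by
    intro S hS
    obtain ⟨τ, _, rfl⟩ := Finset.mem_image.mp hS
    have hcard : (Finset.univ.filter fun σ => f σ = f τ).card = (D n (E n τ)).card := by
      apply Finset.card_bij (fun σ _ => E n σ)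
      · intro σ hσ
        rw [Finset.mem_filter] at hσ
        exact (Phi_eq_iff hn (E_full τ) (E_full σ)).mp hσ.2
      · intro a _ b _ hab
        exact E_inj hab
      · intro M hM
        have hMfull : Full n M := by
          rcases (D_mem (E_full τ)).mp hM with ⟨k, hk⟩ | ⟨k, hk⟩
          · exact hk ▸ full_rotate (E_full τ) k
          · exact hk ▸ full_rotate (full_reverse (E_full τ)) k
        obtain ⟨σ, rfl⟩ := E_surj hMfull
        refine ⟨σ, Finset.mem_filter.mpr ⟨Finset.mem_univ σ, ?_⟩, rfl⟩
        exact (Phi_eq_iff hn (E_full τ) (E_full σ)).mpr hM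
    rw [hcard, D_card hn (E_full τ)]
  have hsum : (Finset.univ : Finset (Equiv.Perm (Fin (n + 1)))).card =
      ∑ S ∈ t, (Finset.univ.filter fun σ => f σ = S).card :=
    Finset.card_eq_sum_card_fiberwise fun σ _ => Finset.mem_image_of_mem f (Finset.mem_univ σ)
  rw [Finset.sum_congr rfl hfiber, Finset.sum_const, smul_eq_mul] at hsum
  have huniv : (Finset.univ : Finset (Equiv.Perm (Fin (n + 1)))).card = (n + 1).factorial := by
    rw [Finset.card_univ, Fintype.card_perm, Fintype.card_fin]
  rw [huniv] at hsum
  obtain ⟨q, hq⟩ : 2 ∣ n.factorial := Nat.dvd_factorial (by omega) hn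
  have hq2 : n.factorial / 2 = q := by rw [hq]; exact Nat.mul_div_cancel_left q (by omega)
  rw [hq2]
  have hfac : (n + 1).factorial = q * (2 * (n + 1)) := by
    rw [Nat.factorial_succ, hq]; ring
  rw [hfac] at hsum
  exact Nat.eq_of_mul_eq_mul_right (by omega) hsum.symm

lemma class_set_eq (hn : 2 ≤ n) :
    {S : Set (List (Fin (n + 1))) | ∃ (l : ℕ) (F : ℕ → List (Fin (n + 1))),
        IsZigzag n (sx n) l F ∧ S = ZigzagClass F} =
      ↑((Finset.univ : Finset (Equiv.Perm (Fin (n + 1)))).image fun σ => Phi n (E n σ)) := by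
  ext S
  simp only [Set.mem_setOf_eq, Finset.coe_image, Finset.coe_univ, Set.image_univ,
    Set.mem_range]
  constructor
  · rintro ⟨l, F, hz, rfl⟩
    obtain ⟨L, hL, hF⟩ := zigzag_eq_W (by omega) hz
    obtain ⟨σ, rfl⟩ := E_surj hL
    refine ⟨σ, ?_⟩
    have hFW : F = W n (E n σ) := funext hF
    rw [hFW, class_eq_Phi (E_full σ)]
  · rintro ⟨σ, rfl⟩
    exact ⟨n + 1, W n (E n σ), zigzag_W (by omega) (E_full σ),
      (class_eq_Phi (E_full σ)).symm⟩

end ZZ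

/-- Every zigzag in the `n`-simplex `α_n` (vertices `Fin (n+1)`, faces the proper
subsets) has length `n + 1`, and for `n ≥ 2` the number of zigzags, identifying each zigzag
with its reverse, is `n!/2`. -/
theorem stmt8 (n : ℕ) (hn : 2 ≤ n) :
    (∀ (l : ℕ) (F : ℕ → List (Fin (n + 1))),
      IsZigzag n (fun X : Finset (Fin (n + 1)) => X ≠ Finset.univ) l F → l = n + 1) ∧
    {S : Set (List (Fin (n + 1))) | ∃ (l : ℕ) (F : ℕ → List (Fin (n + 1))),
        IsZigzag n (fun X : Finset (Fin (n + 1)) => X ≠ Finset.univ) l F ∧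
        S = ZigzagClass F}.ncard = n.factorial / 2 := by
  constructor
  · intro l F hz
    exact ZZ.zigzag_length (by omega) hz
  · rw [show (fun X : Finset (Fin (n + 1)) => X ≠ Finset.univ) = ZZ.sx n from rfl,
      ZZ.class_set_eq hn, Set.ncard_coe_finset]
    exact ZZ.count_classes hn
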